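/- Let φ: (M,g) → (N,h) be a submersion (not necessarily Riemannian) with M non-compact, whose tension field is basic: τ(φ) = ζ∘φ for some vector field ζ on N. If ζ is a Killing vector field on N with constant norm |ζ|² = c² ≠ 0, then S₂ = (c²/2) g; in particular div S₂ = 0 and φ is a proper (non-harmonic) biharmonic map. -/
import Mathlib


open scoped RealInnerProductSpace
noncomputable section

/-- A fixed orthonormal frame of the (model) tangent space of the `m`-dimensional
Riemannian manifold `M`. -/
def onb (m : ℕ) : OrthonormalBasis (Fin m) ℝ (EuclideanSpace ℝ (Fin m)) :=
  EuclideanSpace.basisFun (Fin m) ℝ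

/-- The biharmonic stress-energy tensor
`S₂(X,Y) = ½|τ(φ)|² ⟨X,Y⟩ + ⟨dφ,∇τ(φ)⟩ ⟨X,Y⟩ − ⟨dφ(X),∇_Y τ(φ)⟩ − ⟨dφ(Y),∇_X τ(φ)⟩`,
expressed pointwise in terms of the differential `dphi` of `φ`, the tension field `tau`
and its covariant derivative `Dtau` (the trace `⟨dφ,∇τ(φ)⟩` being computed in an
orthonormal frame). -/
def S2 {m : ℕ} {F : Type*} [NormedAddCommGroup F] [InnerProductSpace ℝ F]
    (dphi : EuclideanSpace ℝ (Fin m) →ₗ[ℝ] F) (tau : F)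
    (Dtau : EuclideanSpace ℝ (Fin m) →ₗ[ℝ] F)
    (X Y : EuclideanSpace ℝ (Fin m)) : ℝ :=
  (1 / 2 : ℝ) * ‖tau‖ ^ 2 * ⟪X, Y⟫
    + (∑ i, ⟪dphi (onb m i), Dtau (onb m i)⟫) * ⟪X, Y⟫
    - ⟪dphi X, Dtau Y⟫ - ⟪dphi Y, Dtau X⟫

/-- Let `φ : (M,g) → (N,h)` be a submersion, `M` non-compact, with basic
tension field `τ(φ) = ζ∘φ`, where `ζ` is a Killing field on `N` of constant norm
`|ζ|² = c² ≠ 0`. Then `S₂ = (c²/2) g`; in particular `div S₂ = 0` and `φ` is a proper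
(non-harmonic) biharmonic map (`τ₂(φ) = 0`, via `div S₂(Y) = −⟨τ₂(φ), dφ(Y)⟩` and the
fact that the divergence of a constant multiple of the metric vanishes). -/
theorem basic_killing_tension_proper_biharmonic
    (m : ℕ)
    (M : Type*) [TopologicalSpace M] [Nonempty M] (hnc : ¬ CompactSpace M)
    (N : Type*) (F : Type*) [NormedAddCommGroup F] [InnerProductSpace ℝ F]
    (phi : M → N)
    (dphi : M → EuclideanSpace ℝ (Fin m) →ₗ[ℝ] F)
    (hsubm : ∀ p, Function.Surjective (dphi p))
    (zeta : N → F) (Dzeta : N → F →ₗ[ℝ] F)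
    (c : ℝ) (hc : c ≠ 0)
    (hKilling : ∀ q u v, ⟪Dzeta q u, v⟫ + ⟪Dzeta q v, u⟫ = 0)
    (hnorm : ∀ q, ‖zeta q‖ ^ 2 = c ^ 2)
    (tau : M → F) (hbasic : ∀ p, tau p = zeta (phi p))
    (Dtau : M → EuclideanSpace ℝ (Fin m) →ₗ[ℝ] F)
    (hchain : ∀ p X, Dtau p X = Dzeta (phi p) (dphi p X))
    (tau2 : M → F) (divS2 : M → EuclideanSpace ℝ (Fin m) → ℝ)
    (hbridge : ∀ p Y, divS2 p Y = -⟪tau2 p, dphi p Y⟫)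
    (hconstdiv : (∃ a : ℝ, ∀ p X Y, S2 (dphi p) (tau p) (Dtau p) X Y = a * ⟪X, Y⟫) →
      ∀ p Y, divS2 p Y = 0) :
    (∀ p X Y, S2 (dphi p) (tau p) (Dtau p) X Y = c ^ 2 / 2 * ⟪X, Y⟫) ∧
    (∀ p Y, divS2 p Y = 0) ∧
    (∀ p, tau2 p = 0) ∧
    (∃ p, tau p ≠ 0) := by

  have key : ∀ p X Y, S2 (dphi p) (tau p) (Dtau p) X Y = c ^ 2 / 2 * ⟪X, Y⟫ := by
    intro p X Y
    have skew : ∀ u v : EuclideanSpace ℝ (Fin m), ⟪dphi p u, Dtau p v⟫ + ⟪dphi p v, Dtau p u⟫ = 0 := by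
      intro u v
      rw [hchain, hchain]
      have := hKilling (phi p) (dphi p v) (dphi p u)
      linarith [real_inner_comm ((dphi p) u) ((Dzeta (phi p)) ((dphi p) v)),
        real_inner_comm ((dphi p) v) ((Dzeta (phi p)) ((dphi p) u))]
    have diag : ∀ u : EuclideanSpace ℝ (Fin m), ⟪dphi p u, Dtau p u⟫ = 0 := by
      intro u; have := skew u u; linarith
    have trace0 : (∑ i, ⟪dphi p (onb m i), Dtau p (onb m i)⟫) = 0 :=
      Finset.sum_eq_zero fun i _ => diag _
    simp only [S2, trace0, hbasic, hnorm, zero_mul, add_zero]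
    have := skew X Y
    ring_nf
    ring_nf at this
    linarith
  have hdiv : ∀ p Y, divS2 p Y = 0 := hconstdiv ⟨c ^ 2 / 2, key⟩
  refine ⟨key, hdiv, ?_, ?_⟩
  · intro p
    have : ∀ w : F, ⟪tau2 p, w⟫ = 0 := by
      intro w
      obtain ⟨Y, hY⟩ := hsubm p w
      have := hdiv p Y
      rw [hbridge, hY] at this
      linarith
    exact inner_self_eq_zero.mp (this (tau2 p))
  · obtain ⟨p⟩ := (inferInstance : Nonempty M)
    refine ⟨p, fun h => hc ?_⟩
    have := hnorm (phi p)
    rw [← hbasic, h] at this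
    simp only [norm_zero, ne_eq, OfNat.ofNat_ne_zero, not_false_eq_true, zero_pow] at this
    simpa using (pow_eq_zero_iff (n:=2) (by norm_num)).mp this.symm


end
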